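/- There is a constant C > 0 such that for all t ≥ 0, the L²-norm in y of e^{ψ(t,y)}·∫_y^∞ (1-φ(t,y'))dy' over (0,∞) is bounded by C(1+t)^{3/4}, where ψ(t,y) = (1+y²)/(16(1+t)^γ) with γ ≥ 2 and φ(t,y) = Erf(y/(2√(t+1))). -/

import Mathlib

open Real MeasureTheory Set

/-- The error function Erf(y) = (2/√π)∫₀^y e^{-z²} dz. -/
noncomputable def Erf (y : ℝ) : ℝ := (2 / Real.sqrt Real.pi) * ∫ z in (0:ℝ)..y, Real.exp (-z^2)

lemma gauss_total : ∫ z in Ioi (0:ℝ), Real.exp (-z^2) = Real.sqrt Real.pi / 2 := by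
  simpa using integral_gaussian_Ioi 1

lemma gauss_split (x : ℝ) (hx : 0 ≤ x) :
    (∫ z in Ioc (0:ℝ) x, Real.exp (-z^2)) + ∫ z in Ioi x, Real.exp (-z^2)
      = Real.sqrt Real.pi / 2 := by
  have hint : Integrable (fun z : ℝ => Real.exp (-z^2)) := by
    simpa using integrable_exp_neg_mul_sq (b := 1) one_pos
  rw [← gauss_total, ← setIntegral_union (Set.Ioc_disjoint_Ioi le_rfl) measurableSet_Ioi
    hint.integrableOn hint.integrableOn, Set.Ioc_union_Ioi_eq_Ioi hx]

lemma erf_le_one (x : ℝ) (hx : 0 ≤ x) : Erf x ≤ 1 := by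
  have hπ : 0 < Real.sqrt Real.pi := Real.sqrt_pos.2 Real.pi_pos
  have h0 : (0:ℝ) ≤ ∫ z in Ioi x, Real.exp (-z^2) :=
    setIntegral_nonneg measurableSet_Ioi fun z _ => (Real.exp_pos _).le
  have := gauss_split x hx
  have h1 : ∫ z in Ioc (0:ℝ) x, Real.exp (-z^2) ≤ Real.sqrt Real.pi / 2 := by linarith
  rw [Erf, intervalIntegral.integral_of_le hx]
  calc 2 / Real.sqrt Real.pi * ∫ z in Ioc (0:ℝ) x, Real.exp (-z^2)
      ≤ 2 / Real.sqrt Real.pi * (Real.sqrt Real.pi / 2) :=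
        mul_le_mul_of_nonneg_left h1 (by positivity)
    _ = 1 := by field_simp

lemma one_sub_erf_le (x : ℝ) (hx : 0 ≤ x) : 1 - Erf x ≤ 2 * Real.exp (-(x^2/2)) := by
  have hπ : 0 < Real.sqrt Real.pi := Real.sqrt_pos.2 Real.pi_pos
  have hint : Integrable (fun z : ℝ => Real.exp (-z^2)) := by
    simpa using integrable_exp_neg_mul_sq (b := 1) one_pos
  have hint2 : Integrable (fun z : ℝ => Real.exp (-(x^2/2)) * Real.exp (-(1/2) * z^2)) :=
    (integrable_exp_neg_mul_sq (by norm_num : (0:ℝ) < 1/2)).const_mul _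
  have hsplit := gauss_split x hx
  have h1 : 1 - Erf x = 2 / Real.sqrt Real.pi * ∫ z in Ioi x, Real.exp (-z^2) := by
    rw [Erf, intervalIntegral.integral_of_le hx]
    have : (1:ℝ) = 2 / Real.sqrt Real.pi * (Real.sqrt Real.pi / 2) := by field_simp
    rw [this, ← hsplit]; ring
  rw [h1]
  have h2 : (∫ z in Ioi x, Real.exp (-z^2))
      ≤ ∫ z in Ioi x, Real.exp (-(x^2/2)) * Real.exp (-(1/2) * z^2) := by
    refine setIntegral_mono_on hint.integrableOn hint2.integrableOn measurableSet_Ioi ?_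
    intro z hz
    rw [← Real.exp_add]
    apply Real.exp_le_exp.2
    have : x^2 ≤ z^2 := by nlinarith [le_of_lt (Set.mem_Ioi.1 hz)]
    nlinarith
  have h3 : (∫ z in Ioi x, Real.exp (-(x^2/2)) * Real.exp (-(1/2) * z^2))
      ≤ ∫ z in Ioi (0:ℝ), Real.exp (-(x^2/2)) * Real.exp (-(1/2) * z^2) := by
    refine setIntegral_mono_set hint2.integrableOn ?_ (Set.Ioi_subset_Ioi hx).eventuallyLE
    filter_upwards with z using by positivity
  have h4 : (∫ z in Ioi (0:ℝ), Real.exp (-(x^2/2)) * Real.exp (-(1/2) * z^2))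
      = Real.exp (-(x^2/2)) * (Real.sqrt (π / (1/2)) / 2) := by
    rw [integral_const_mul, integral_gaussian_Ioi]
  have h5 : Real.sqrt (π / (1/2)) / 2 ≤ Real.sqrt π := by
    rw [div_le_iff₀ (by norm_num : (0:ℝ) < 2)]
    have : π / (1/2) ≤ 4 * π := by nlinarith [Real.pi_pos]
    calc Real.sqrt (π / (1/2)) ≤ Real.sqrt (4 * π) := Real.sqrt_le_sqrt this
      _ = 2 * Real.sqrt π := by
          rw [show (4:ℝ) * π = 2^2 * π by ring, Real.sqrt_mul (by positivity),
            Real.sqrt_sq (by norm_num)]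
      _ = Real.sqrt π * 2 := by ring
  calc 2 / Real.sqrt Real.pi * ∫ z in Ioi x, Real.exp (-z^2)
      ≤ 2 / Real.sqrt Real.pi * (Real.exp (-(x^2/2)) * Real.sqrt π) := by
        apply mul_le_mul_of_nonneg_left _ (by positivity)
        calc (∫ z in Ioi x, Real.exp (-z^2)) ≤ _ := h2
          _ ≤ _ := h3
          _ = _ := h4
          _ ≤ Real.exp (-(x^2/2)) * Real.sqrt π :=
              mul_le_mul_of_nonneg_left h5 (Real.exp_pos _).le
    _ = 2 * Real.exp (-(x^2/2)) := by field_simp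

lemma gauss_le (c u : ℝ) (hc : 0 < c) (hu : 1 ≤ u) :
    ∫ x in Ioi (0:ℝ), Real.exp (-(1/(c*u)) * x^2) ≤ Real.sqrt c * Real.sqrt u := by
  have hu0 : 0 < u := lt_of_lt_of_le one_pos hu
  rw [integral_gaussian_Ioi]
  have h1 : π / (1/(c*u)) = π * (c * u) := by field_simp
  rw [h1, div_le_iff₀ (by norm_num : (0:ℝ) < 2)]
  calc Real.sqrt (π * (c*u)) ≤ Real.sqrt (4 * (c*u)) := by
        apply Real.sqrt_le_sqrt
        nlinarith [Real.pi_le_four, mul_pos hc hu0]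
    _ = 2 * (Real.sqrt c * Real.sqrt u) := by
        rw [show (4:ℝ) * (c*u) = 2^2 * c * u by ring, Real.sqrt_mul (by positivity),
          Real.sqrt_mul (by positivity), Real.sqrt_sq (by norm_num)]
        ring
    _ ≤ Real.sqrt c * Real.sqrt u * 2 := le_of_eq (by ring)

lemma sqrt_c_le {c k : ℝ} (h : c ≤ k^2) (hk : 0 ≤ k) : Real.sqrt c ≤ k := by
  calc Real.sqrt c ≤ Real.sqrt (k^2) := Real.sqrt_le_sqrt h
    _ = k := Real.sqrt_sq hk

lemma inner_bound (t y : ℝ) (ht : 0 ≤ t) (hy : 0 ≤ y) :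
    (∫ y' in Ioi y, (1 - Erf (y' / (2 * Real.sqrt (t + 1)))))
      ≤ 10 * Real.sqrt (t+1) * Real.exp (-(y^2/(12*(t+1)))) := by
  set u := t + 1 with hu_def
  have hu : 1 ≤ u := by simp [hu_def]; linarith
  have hu0 : 0 < u := lt_of_lt_of_le one_pos hu
  have hs : Real.sqrt u ^ 2 = u := Real.sq_sqrt hu0.le
  have hs0 : 0 < Real.sqrt u := Real.sqrt_pos.2 hu0
  have hb : (0:ℝ) < 1/(24*u) := by positivity
  set E := Real.exp (-(y^2/(12*u))) with hE
  have hgint : Integrable (fun y' : ℝ => 2 * E * Real.exp (-(1/(24*u)) * y'^2)) :=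
    (integrable_exp_neg_mul_sq hb).const_mul _
  have hmono : (∫ y' in Ioi y, (1 - Erf (y' / (2 * Real.sqrt u))))
      ≤ ∫ y' in Ioi y, 2 * E * Real.exp (-(1/(24*u)) * y'^2) := by
    apply integral_mono_of_nonneg
    · filter_upwards [self_mem_ae_restrict measurableSet_Ioi] with y' hy'
      have hy'0 : 0 ≤ y' := le_trans hy (le_of_lt hy')
      have : 0 ≤ y' / (2 * Real.sqrt u) := by positivity
      simpa using by linarith [erf_le_one _ this]
    · exact hgint.restrict
    · filter_upwards [self_mem_ae_restrict measurableSet_Ioi] with y' hy'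
      have hy'0 : 0 ≤ y' := le_trans hy (le_of_lt hy')
      have harg : 0 ≤ y' / (2 * Real.sqrt u) := by positivity
      calc 1 - Erf (y' / (2 * Real.sqrt u))
          ≤ 2 * Real.exp (-((y' / (2 * Real.sqrt u))^2/2)) := one_sub_erf_le _ harg
        _ ≤ 2 * E * Real.exp (-(1/(24*u)) * y'^2) := by
            rw [hE, mul_assoc, ← Real.exp_add]
            apply mul_le_mul_of_nonneg_left _ (by norm_num)
            apply Real.exp_le_exp.2
            have hsq : (y' / (2 * Real.sqrt u))^2 = y'^2 / (4*u) := by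
              rw [div_pow]; congr 1; rw [mul_pow, hs]; ring
            rw [hsq]
            have hyy : y^2 ≤ y'^2 := by nlinarith [Set.mem_Ioi.1 hy', hy]
            have hune : u ≠ 0 := hu0.ne'
            have key : y^2/(12*u) + 1/(24*u) * y'^2 ≤ y'^2/(4*u)/2 := by
              have h : y^2/(12*u) ≤ y'^2/(12*u) := by gcongr
              have e : y'^2/(12*u) + 1/(24*u)*y'^2 = y'^2/(4*u)/2 := by field_simp; ring
              linarith
            linarith
  have htail : (∫ y' in Ioi y, 2 * E * Real.exp (-(1/(24*u)) * y'^2))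
      ≤ ∫ y' in Ioi (0:ℝ), 2 * E * Real.exp (-(1/(24*u)) * y'^2) := by
    refine setIntegral_mono_set hgint.integrableOn ?_ (Set.Ioi_subset_Ioi hy).eventuallyLE
    filter_upwards with z using by positivity
  have hval : (∫ y' in Ioi (0:ℝ), 2 * E * Real.exp (-(1/(24*u)) * y'^2))
      ≤ 2 * E * (5 * Real.sqrt u) := by
    rw [integral_const_mul]
    apply mul_le_mul_of_nonneg_left _ (by positivity)
    calc (∫ y' in Ioi (0:ℝ), Real.exp (-(1/(24*u)) * y'^2))
        ≤ Real.sqrt 24 * Real.sqrt u := gauss_le 24 u (by norm_num) hu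
      _ ≤ 5 * Real.sqrt u :=
          mul_le_mul_of_nonneg_right (sqrt_c_le (by norm_num) (by norm_num)) hs0.le
  calc (∫ y' in Ioi y, (1 - Erf (y' / (2 * Real.sqrt u)))) ≤ _ := hmono
    _ ≤ _ := htail
    _ ≤ 2 * E * (5 * Real.sqrt u) := hval
    _ = 10 * Real.sqrt u * E := by ring

lemma psi_bound (γ t y : ℝ) (hγ : 2 ≤ γ) (ht : 0 ≤ t) :
    Real.exp ((1 + y^2) / (16 * (1+t)^γ)) ≤ 3 * Real.exp (y^2/(16*(1+t))) := by
  have hu0 : (0:ℝ) < 1 + t := by linarith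
  have hu : (1:ℝ) ≤ 1 + t := by linarith
  have hrp : (1+t) ≤ (1+t)^γ := by
    calc (1+t) = (1+t)^(1:ℝ) := (Real.rpow_one _).symm
      _ ≤ (1+t)^γ := Real.rpow_le_rpow_of_exponent_le hu (by linarith)
  have hpos : (0:ℝ) < (1+t)^γ := Real.rpow_pos_of_pos hu0 _
  have h1 : (1 + y^2) / (16 * (1+t)^γ) ≤ (1 + y^2)/(16*(1+t)) := by
    gcongr
  have h2 : (1+y^2)/(16*(1+t)) ≤ 1/16 + y^2/(16*(1+t)) := by
    have e : (1+y^2)/(16*(1+t)) = 1/(16*(1+t)) + y^2/(16*(1+t)) := by ring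
    rw [e]
    have : 1/(16*(1+t)) ≤ 1/16 := by
      apply div_le_div_of_nonneg_left (by norm_num) (by norm_num) (by linarith)
    linarith
  calc Real.exp ((1 + y^2) / (16 * (1+t)^γ))
      ≤ Real.exp (1/16 + y^2/(16*(1+t))) := Real.exp_le_exp.2 (le_trans h1 h2)
    _ = Real.exp (1/16) * Real.exp (y^2/(16*(1+t))) := Real.exp_add _ _
    _ ≤ 3 * Real.exp (y^2/(16*(1+t))) := by
        apply mul_le_mul_of_nonneg_right _ (Real.exp_pos _).le
        calc Real.exp (1/16) ≤ Real.exp 1 := Real.exp_le_exp.2 (by norm_num)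
          _ ≤ 3 := by linarith [Real.exp_one_lt_d9]

/-- With ψ(t,y) = (1+y²)/(16(1+t)^γ), γ ≥ 2, and φ(t,y) = Erf(y/(2√(t+1))),
there is C > 0 with
‖e^{ψ(t,·)} ∫_·^∞(1-φ(t,y'))dy'‖_{L²(0,∞)} ≤ C (1+t)^{3/4} for all t ≥ 0. -/
theorem stmt11 (γ : ℝ) (hγ : 2 ≤ γ) :
    ∃ C > (0:ℝ), ∀ t ≥ (0:ℝ),
      (∫ y in Set.Ioi (0:ℝ),
          (Real.exp ((1 + y ^ 2) / (16 * (1 + t) ^ γ))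
              * ∫ y' in Set.Ioi y, (1 - Erf (y' / (2 * Real.sqrt (t + 1))))) ^ 2)
          ^ ((1:ℝ) / 2)
        ≤ C * (1 + t) ^ ((3:ℝ) / 4) := by
  refine ⟨70, by norm_num, fun t ht => ?_⟩
  have hu0 : (0:ℝ) < 1 + t := by linarith
  have hu : (1:ℝ) ≤ 1 + t := by linarith
  have hune : (1+t) ≠ 0 := hu0.ne'
  have hb : (0:ℝ) < 1/(24*(1+t)) := by positivity
  have hgi : Integrable (fun y : ℝ => 900*(1+t) * Real.exp (-(1/(24*(1+t))) * y^2)) :=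
    (integrable_exp_neg_mul_sq hb).const_mul _
  set X := ∫ y in Set.Ioi (0:ℝ),
      (Real.exp ((1 + y ^ 2) / (16 * (1 + t) ^ γ))
          * ∫ y' in Set.Ioi y, (1 - Erf (y' / (2 * Real.sqrt (t + 1))))) ^ 2 with hX
  have hX0 : 0 ≤ X := integral_nonneg fun y => sq_nonneg _
  have hXle : X ≤ 4900 * ((1+t) * Real.sqrt (1+t)) := by
    have step1 : X ≤ ∫ y in Set.Ioi (0:ℝ), 900*(1+t) * Real.exp (-(1/(24*(1+t))) * y^2) := by
      rw [hX]
      apply integral_mono_of_nonneg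
      · filter_upwards with y using sq_nonneg _
      · exact hgi.restrict
      · filter_upwards [self_mem_ae_restrict measurableSet_Ioi] with y hy
        have hy0 : 0 < y := Set.mem_Ioi.1 hy
        set I := ∫ y' in Set.Ioi y, (1 - Erf (y' / (2 * Real.sqrt (t + 1)))) with hI_def
        have hI0 : 0 ≤ I := by
          apply setIntegral_nonneg measurableSet_Ioi
          intro y' hy'
          have hy'0 : 0 ≤ y' / (2 * Real.sqrt (t+1)) := by
            have : 0 ≤ y' := le_trans hy0.le (le_of_lt hy')
            positivity
          linarith [erf_le_one _ hy'0]
        have hI : I ≤ 10 * Real.sqrt (t+1) * Real.exp (-(y^2/(12*(t+1)))) :=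
          inner_bound t y ht hy0.le
        have hψ : Real.exp ((1 + y^2) / (16 * (1+t)^γ)) ≤ 3 * Real.exp (y^2/(16*(1+t))) :=
          psi_bound γ t y hγ ht
        have hprod : Real.exp ((1 + y^2) / (16 * (1+t)^γ)) * I
            ≤ 3 * Real.exp (y^2/(16*(1+t)))
              * (10 * Real.sqrt (t+1) * Real.exp (-(y^2/(12*(t+1))))) :=
          mul_le_mul hψ hI hI0 (by positivity)
        have hnn : 0 ≤ Real.exp ((1 + y^2) / (16 * (1+t)^γ)) * I :=
          mul_nonneg (Real.exp_pos _).le hI0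
        calc (Real.exp ((1 + y^2) / (16 * (1+t)^γ)) * I)^2
            ≤ (3 * Real.exp (y^2/(16*(1+t)))
                * (10 * Real.sqrt (t+1) * Real.exp (-(y^2/(12*(t+1))))))^2 :=
              pow_le_pow_left₀ hnn hprod 2
          _ = 900 * (Real.sqrt (t+1))^2
                * (Real.exp (y^2/(16*(1+t))) * Real.exp (-(y^2/(12*(t+1)))))^2 := by ring
          _ = 900*(1+t) * Real.exp (-(1/(24*(1+t))) * y^2) := by
              rw [Real.sq_sqrt (by linarith : (0:ℝ) ≤ t+1), ← Real.exp_add, pow_two,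
                ← Real.exp_add]
              have : y^2/(16*(1+t)) + -(y^2/(12*(t+1))) + (y^2/(16*(1+t)) + -(y^2/(12*(t+1))))
                  = -(1/(24*(1+t))) * y^2 := by field_simp; ring
              rw [this, show t+1 = 1+t by ring]
    have step2 : (∫ y in Set.Ioi (0:ℝ), 900*(1+t) * Real.exp (-(1/(24*(1+t))) * y^2))
        = 900*(1+t) * ∫ y in Set.Ioi (0:ℝ), Real.exp (-(1/(24*(1+t))) * y^2) :=
      integral_const_mul _ _
    have step3 : (∫ y in Set.Ioi (0:ℝ), Real.exp (-(1/(24*(1+t))) * y^2))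
        ≤ 5 * Real.sqrt (1+t) := by
      calc (∫ y in Set.Ioi (0:ℝ), Real.exp (-(1/(24*(1+t))) * y^2))
          ≤ Real.sqrt 24 * Real.sqrt (1+t) := gauss_le 24 (1+t) (by norm_num) hu
        _ ≤ 5 * Real.sqrt (1+t) :=
            mul_le_mul_of_nonneg_right (sqrt_c_le (by norm_num) (by norm_num))
              (Real.sqrt_nonneg _)
    calc X ≤ _ := step1
      _ = _ := step2
      _ ≤ 900*(1+t) * (5 * Real.sqrt (1+t)) :=
          mul_le_mul_of_nonneg_left step3 (by positivity)
      _ ≤ 4900 * ((1+t) * Real.sqrt (1+t)) := by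
          nlinarith [Real.sqrt_nonneg (1+t), mul_nonneg hu0.le (Real.sqrt_nonneg (1+t))]
  have hmain : X ^ ((1:ℝ)/2) ≤ (4900 * ((1+t) * Real.sqrt (1+t))) ^ ((1:ℝ)/2) :=
    Real.rpow_le_rpow hX0 hXle (by norm_num)
  have heq : (4900 * ((1+t) * Real.sqrt (1+t))) ^ ((1:ℝ)/2) = 70 * (1+t) ^ ((3:ℝ)/4) := by
    rw [Real.mul_rpow (by norm_num) (by positivity)]
    have e1 : (4900:ℝ) ^ ((1:ℝ)/2) = 70 := by
      rw [show (4900:ℝ) = 70^2 by norm_num, ← Real.rpow_natCast 70 2,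
        ← Real.rpow_mul (by norm_num)]
      norm_num
    have e2 : (1+t) * Real.sqrt (1+t) = (1+t) ^ ((3:ℝ)/2) := by
      rw [Real.sqrt_eq_rpow, show (3:ℝ)/2 = 1 + 1/2 by norm_num, Real.rpow_add hu0,
        Real.rpow_one]
    rw [e1, e2, ← Real.rpow_mul hu0.le]
    norm_num
  rw [heq] at hmain
  exact hmain
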